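/- (Proposition 1 of the paper.) Suppose ψ̃ ∈ C²(Q̄) is real-valued with ∇_xψ̃(t,x) ≠ 0 on Q̄, and suppose that 4 Σ_{m,m̃,k,ℓ=1}^n a_{mk}a_{m̃ℓ} ξ_m ξ_{m̃} ∂²_{x_kx_ℓ}ψ̃ − 2 Σ_{m,k=1}^n a_{mk} ∂_{x_m}ψ̃ · a_{(k)}(t,x,ξ',ξ') + 4 Σ_{m,k=1}^n a_{mk} ξ_m a_{(k)}(t,x,ξ',∇ψ̃) > 0 for all (t,x) ∈ Q̄ and all ξ' ∈ ℝⁿ∖{0} satisfying a(t,x,∇ψ̃,ξ') = 0. Then there exists λ₀ > 0 such that for every λ ≥ λ₀ the function e^{λψ̃} is pseudo-convex with respect to p; that is, q_{e^{λψ̃}}(t,x,ξ',τ) > 0 for every (t,x) ∈ Q̄, every τ > 0 and every ξ' ∈ ℝⁿ with a(t,x,ξ',∇ψ̃(t,x)) = 0. -/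

import Mathlib

open Real

/-- Partial derivative along the `k`-th coordinate of a function on `ℝⁿ`. -/
noncomputable def pd {n : ℕ} {E : Type*} [NormedAddCommGroup E] [NormedSpace ℝ E]
    (k : Fin n) (F : (Fin n → ℝ) → E) (x : Fin n → ℝ) : E :=
  fderiv ℝ F x (Pi.single k 1)

/-- The quadratic form `a(t,x,u,v) = Σ_{k,j} a_{kj}(t,x) u_k v_j`. -/
noncomputable def aF {n : ℕ} (a : Fin n → Fin n → ℝ → (Fin n → ℝ) → ℝ)
    (t : ℝ) (x u v : Fin n → ℝ) : ℝ :=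
  ∑ k, ∑ j, a k j t x * u k * v j

/-- The derived quadratic form `a_{(p)}(t,x,u,v) = Σ_{k,j} ∂_{x_p} a_{kj}(t,x) u_k v_j`. -/
noncomputable def aD {n : ℕ} (a : Fin n → Fin n → ℝ → (Fin n → ℝ) → ℝ)
    (p : Fin n) (t : ℝ) (x u v : Fin n → ℝ) : ℝ :=
  ∑ k, ∑ j, pd p (fun y => a k j t y) x * u k * v j

/-- Spatial gradient. -/
noncomputable def gradx {n : ℕ} (ψ : ℝ → (Fin n → ℝ) → ℝ) (t : ℝ) (x : Fin n → ℝ) :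
    Fin n → ℝ :=
  fun k => pd k (ψ t) x

/-- Spatial Hessian entry `∂²_{x_k x_ℓ} ψ`. -/
noncomputable def hessx {n : ℕ} (ψ : ℝ → (Fin n → ℝ) → ℝ) (t : ℝ) (x : Fin n → ℝ)
    (k l : Fin n) : ℝ :=
  pd l (fun y => pd k (ψ t) y) x

/-- The symbol `q_Ψ(t,x,ξ',τ)`. -/
noncomputable def qSym {n : ℕ} (a : Fin n → Fin n → ℝ → (Fin n → ℝ) → ℝ)
    (Ψ : ℝ → (Fin n → ℝ) → ℝ) (t : ℝ) (x ξ : Fin n → ℝ) (τ : ℝ) : ℝ :=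
  4 * ∑ m, ∑ m', ∑ k, ∑ l, a m k t x * a m' l t x
      * (ξ m * ξ m' + τ ^ 2 * gradx Ψ t x m * gradx Ψ t x m') * hessx Ψ t x k l
  - 2 * ∑ m, ∑ k, a m k t x * gradx Ψ t x m
      * (aD a k t x ξ ξ - τ ^ 2 * aD a k t x (gradx Ψ t x) (gradx Ψ t x))
  + 4 * ∑ m, ∑ k, a m k t x * ξ m * aD a k t x ξ (gradx Ψ t x)

/-- The expression (ramsai) of the paper. -/
noncomputable def ramsai {n : ℕ} (a : Fin n → Fin n → ℝ → (Fin n → ℝ) → ℝ)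
    (ψ : ℝ → (Fin n → ℝ) → ℝ) (t : ℝ) (x ξ : Fin n → ℝ) : ℝ :=
  4 * ∑ m, ∑ m', ∑ k, ∑ l, a m k t x * a m' l t x * ξ m * ξ m' * hessx ψ t x k l
  - 2 * ∑ m, ∑ k, a m k t x * gradx ψ t x m * aD a k t x ξ ξ
  + 4 * ∑ m, ∑ k, a m k t x * ξ m * aD a k t x ξ (gradx ψ t x)

section aux
variable {n : ℕ}

lemma hasFDerivAt_slice {V : Type*} [NormedAddCommGroup V] [NormedSpace ℝ V]
    {F : ℝ × (Fin n → ℝ) → V} (hF : Differentiable ℝ F) (t : ℝ) (x : Fin n → ℝ) :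
    HasFDerivAt (fun y => F (t, y))
      ((fderiv ℝ F (t, x)).comp (ContinuousLinearMap.inr ℝ ℝ (Fin n → ℝ))) x :=
  (hF (t, x)).hasFDerivAt.comp x (hasFDerivAt_prodMk_right t x)

lemma pd_slice {V : Type*} [NormedAddCommGroup V] [NormedSpace ℝ V]
    {F : ℝ × (Fin n → ℝ) → V} (hF : Differentiable ℝ F) (k : Fin n) (t : ℝ) (x : Fin n → ℝ) :
    pd k (fun y => F (t, y)) x = fderiv ℝ F (t, x) (0, Pi.single k 1) := by
  rw [pd, (hasFDerivAt_slice hF t x).fderiv]; rfl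

lemma continuous_pd_slice {V : Type*} [NormedAddCommGroup V] [NormedSpace ℝ V]
    {F : ℝ × (Fin n → ℝ) → V} (hF : ContDiff ℝ 1 F) (k : Fin n) :
    Continuous (fun p : ℝ × (Fin n → ℝ) => pd k (fun y => F (p.1, y)) p.2) := by
  have h : (fun p : ℝ × (Fin n → ℝ) => pd k (fun y => F (p.1, y)) p.2)
      = fun p => fderiv ℝ F p (0, Pi.single k 1) := by
    funext p; rw [pd_slice (hF.differentiable one_ne_zero) k p.1 p.2]
  rw [h]
  exact (hF.continuous_fderiv one_ne_zero).clm_apply continuous_const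


lemma pd_pd_slice {F : ℝ × (Fin n → ℝ) → ℝ} (hF : ContDiff ℝ 2 F) (k l : Fin n)
    (t : ℝ) (x : Fin n → ℝ) :
    pd l (fun y => pd k (fun z => F (t, z)) y) x
      = fderiv ℝ (fderiv ℝ F) (t, x) (0, Pi.single l 1) (0, Pi.single k 1) := by
  have hG : ContDiff ℝ 1 (fderiv ℝ F) := hF.fderiv_right (by norm_num)
  have hrw : (fun y => pd k (fun z => F (t, z)) y)
      = fun y => (ContinuousLinearMap.apply ℝ ℝ ((0:ℝ), Pi.single k (1:ℝ))) (fderiv ℝ F (t, y)) := by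
    funext y
    rw [pd_slice (hF.differentiable (by norm_num)) k t y]
    rfl
  rw [hrw, pd]
  have h1 := hasFDerivAt_slice (hG.differentiable one_ne_zero) t x
  have h2 := ((ContinuousLinearMap.apply ℝ ℝ ((0:ℝ), Pi.single k (1:ℝ))).hasFDerivAt
      (x := fderiv ℝ F (t, x))).comp x h1
  have h2' : HasFDerivAt (fun y => (ContinuousLinearMap.apply ℝ ℝ ((0:ℝ), Pi.single k (1:ℝ))) (fderiv ℝ F (t, y)))
      (((ContinuousLinearMap.apply ℝ ℝ ((0:ℝ), Pi.single k (1:ℝ)))).comp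
        ((fderiv ℝ (fderiv ℝ F) (t, x)).comp (ContinuousLinearMap.inr ℝ ℝ (Fin n → ℝ)))) x := h2
  rw [h2'.fderiv]
  rfl

lemma continuous_pd_pd_slice {F : ℝ × (Fin n → ℝ) → ℝ} (hF : ContDiff ℝ 2 F) (k l : Fin n) :
    Continuous (fun p : ℝ × (Fin n → ℝ) =>
      pd l (fun y => pd k (fun z => F (p.1, z)) y) p.2) := by
  have hG : ContDiff ℝ 1 (fderiv ℝ F) := hF.fderiv_right (by norm_num)
  have h : (fun p : ℝ × (Fin n → ℝ) => pd l (fun y => pd k (fun z => F (p.1, z)) y) p.2)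
      = fun p => fderiv ℝ (fderiv ℝ F) p (0, Pi.single l 1) (0, Pi.single k 1) := by
    funext p; rw [pd_pd_slice hF k l p.1 p.2]
  rw [h]
  exact ((hG.continuous_fderiv one_ne_zero).clm_apply continuous_const).clm_apply continuous_const

end aux

section aux2
variable {n : ℕ} {ψ : ℝ → (Fin n → ℝ) → ℝ}

lemma diff_slice (hψ : ContDiff ℝ 2 (fun p : ℝ × (Fin n → ℝ) => ψ p.1 p.2)) (t : ℝ) :
    Differentiable ℝ (ψ t) :=
  (hψ.differentiable (by norm_num)).comp ((differentiable_const t).prodMk differentiable_id)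

lemma diff_pd_slice (hψ : ContDiff ℝ 2 (fun p : ℝ × (Fin n → ℝ) => ψ p.1 p.2))
    (t : ℝ) (k : Fin n) : Differentiable ℝ (fun y => pd k (ψ t) y) := by
  have hG : ContDiff ℝ 1 (fderiv ℝ (fun p : ℝ × (Fin n → ℝ) => ψ p.1 p.2)) :=
    hψ.fderiv_right (by norm_num)
  have h : (fun y => pd k (ψ t) y)
      = fun y => fderiv ℝ (fun p : ℝ × (Fin n → ℝ) => ψ p.1 p.2) (t, y) (0, Pi.single k 1) := by
    funext y
    exact pd_slice (hψ.differentiable (by norm_num)) k t y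
  rw [h]
  exact Differentiable.clm_apply
    ((hG.differentiable one_ne_zero).comp ((differentiable_const t).prodMk differentiable_id))
    (differentiable_const _)

lemma gradx_exp (hψ : ContDiff ℝ 2 (fun p : ℝ × (Fin n → ℝ) => ψ p.1 p.2))
    (lam t : ℝ) (x : Fin n → ℝ) (m : Fin n) :
    gradx (fun s y => Real.exp (lam * ψ s y)) t x m
      = lam * Real.exp (lam * ψ t x) * gradx ψ t x m := by
  have hdt : DifferentiableAt ℝ (ψ t) x := diff_slice hψ t x
  have hd : DifferentiableAt ℝ (fun y => lam * ψ t y) x := hdt.const_mul lam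
  show pd m (fun y => Real.exp (lam * ψ t y)) x = _
  rw [pd, fderiv_exp hd, fderiv_const_mul hdt lam]
  simp [gradx, pd]
  ring

lemma hessx_exp (hψ : ContDiff ℝ 2 (fun p : ℝ × (Fin n → ℝ) => ψ p.1 p.2))
    (lam t : ℝ) (x : Fin n → ℝ) (k l : Fin n) :
    hessx (fun s y => Real.exp (lam * ψ s y)) t x k l
      = lam * Real.exp (lam * ψ t x) * hessx ψ t x k l
        + lam ^ 2 * Real.exp (lam * ψ t x) * gradx ψ t x k * gradx ψ t x l := by
  have hrw : (fun y => pd k ((fun s y => Real.exp (lam * ψ s y)) t) y)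
      = fun y => lam * (Real.exp (lam * ψ t y) * pd k (ψ t) y) := by
    funext y
    have := gradx_exp hψ lam t y k
    simp only [gradx] at this
    rw [this]; ring
  show pd l (fun y => pd k ((fun s y => Real.exp (lam * ψ s y)) t) y) x = _
  rw [hrw]
  have hu : DifferentiableAt ℝ (fun y => Real.exp (lam * ψ t y)) x :=
    ((diff_slice hψ t x).const_mul lam).exp
  have hv : DifferentiableAt ℝ (fun y => pd k (ψ t) y) x := diff_pd_slice hψ t k x
  rw [pd, fderiv_const_mul (hu.fun_mul hv) lam, fderiv_fun_mul hu hv]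
  have h1 : fderiv ℝ (fun y => Real.exp (lam * ψ t y)) x (Pi.single l 1)
      = lam * Real.exp (lam * ψ t x) * gradx ψ t x l := gradx_exp hψ lam t x l
  simp only [ContinuousLinearMap.smul_apply, ContinuousLinearMap.add_apply, smul_eq_mul]
  rw [h1]
  show lam * (Real.exp (lam * ψ t x) * hessx ψ t x k l
      + gradx ψ t x k * (lam * Real.exp (lam * ψ t x) * gradx ψ t x l)) = _
  ring

end aux2

section sums
variable {n : ℕ}

lemma sum4_factor (F G : Fin n → Fin n → ℝ) :
    ∑ m, ∑ m', ∑ k, ∑ l, F m k * G m' l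
      = (∑ m, ∑ k, F m k) * (∑ m', ∑ l, G m' l) := by
  have h1 : ∀ m m', (∑ k, ∑ l, F m k * G m' l) = (∑ k, F m k) * (∑ l, G m' l) := by
    intro m m'
    rw [Finset.sum_mul_sum]
  calc ∑ m, ∑ m', ∑ k, ∑ l, F m k * G m' l
      = ∑ m, ∑ m', (∑ k, F m k) * (∑ l, G m' l) := by
        refine Finset.sum_congr rfl fun m _ => Finset.sum_congr rfl fun m' _ => h1 m m'
    _ = ∑ m, (∑ k, F m k) * (∑ m', ∑ l, G m' l) := by
        refine Finset.sum_congr rfl fun m _ => ?_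
        rw [← Finset.mul_sum]
    _ = (∑ m, ∑ k, F m k) * (∑ m', ∑ l, G m' l) := by
        rw [← Finset.sum_mul]

lemma sum4_const_mul (c : ℝ) (f : Fin n → Fin n → Fin n → Fin n → ℝ) :
    ∑ m, ∑ m', ∑ k, ∑ l, c * f m m' k l = c * ∑ m, ∑ m', ∑ k, ∑ l, f m m' k l := by
  simp only [← Finset.mul_sum]

lemma sum2_const_mul (c : ℝ) (f : Fin n → Fin n → ℝ) :
    ∑ m, ∑ k, c * f m k = c * ∑ m, ∑ k, f m k := by
  simp only [← Finset.mul_sum]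

variable {a : Fin n → Fin n → ℝ → (Fin n → ℝ) → ℝ}

lemma aD_mul_left (p : Fin n) (t : ℝ) (x : Fin n → ℝ) (c : ℝ) (u v : Fin n → ℝ) :
    aD a p t x (fun i => c * u i) v = c * aD a p t x u v := by
  simp only [aD, Finset.mul_sum]
  exact Finset.sum_congr rfl fun k _ => Finset.sum_congr rfl fun j _ => by ring

lemma aD_mul_right (p : Fin n) (t : ℝ) (x : Fin n → ℝ) (c : ℝ) (u v : Fin n → ℝ) :
    aD a p t x u (fun i => c * v i) = c * aD a p t x u v := by
  simp only [aD, Finset.mul_sum]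
  exact Finset.sum_congr rfl fun k _ => Finset.sum_congr rfl fun j _ => by ring

lemma aF_comm (h : ∀ k j, a k j = a j k) (t : ℝ) (x u v : Fin n → ℝ) :
    aF a t x u v = aF a t x v u := by
  rw [aF, Finset.sum_comm]
  exact Finset.sum_congr rfl fun k _ => Finset.sum_congr rfl fun j _ => by rw [h j k]; ring

lemma ramsai_zero (ψ : ℝ → (Fin n → ℝ) → ℝ) (t : ℝ) (x : Fin n → ℝ) :
    ramsai a ψ t x 0 = 0 := by
  simp [ramsai, aD]

end sums

section ident
variable {n : ℕ} (a : Fin n → Fin n → ℝ → (Fin n → ℝ) → ℝ) {ψ : ℝ → (Fin n → ℝ) → ℝ}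

lemma qSym_identity (hψ : ContDiff ℝ 2 (fun p : ℝ × (Fin n → ℝ) => ψ p.1 p.2))
    (lam t : ℝ) (x ξ : Fin n → ℝ) (τ : ℝ) :
    qSym a (fun s y => Real.exp (lam * ψ s y)) t x ξ τ
      = lam * Real.exp (lam * ψ t x) *
        (ramsai a ψ t x ξ
          + (τ * lam * Real.exp (lam * ψ t x)) ^ 2 *
            (4 * ∑ m, ∑ m', ∑ k, ∑ l, a m k t x * a m' l t x
                * gradx ψ t x m * gradx ψ t x m' * hessx ψ t x k l
             + 2 * ∑ m, ∑ k, a m k t x * gradx ψ t x m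
                * aD a k t x (gradx ψ t x) (gradx ψ t x))
          + 4 * lam * ((aF a t x ξ (gradx ψ t x)) ^ 2
             + (τ * lam * Real.exp (lam * ψ t x)) ^ 2
                * (aF a t x (gradx ψ t x) (gradx ψ t x)) ^ 2)) := by
  have hgf : gradx (fun s y => Real.exp (lam * ψ s y)) t x
      = fun m => (lam * Real.exp (lam * ψ t x)) * gradx ψ t x m := by
    funext m; rw [gradx_exp hψ lam t x m]
  have hh : ∀ k l, hessx (fun s y => Real.exp (lam * ψ s y)) t x k l
      = lam * Real.exp (lam * ψ t x) * hessx ψ t x k l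
        + lam ^ 2 * Real.exp (lam * ψ t x) * gradx ψ t x k * gradx ψ t x l :=
    hessx_exp hψ lam t x
  rw [qSym, hgf]
  simp only [hh, aD_mul_left, aD_mul_right]
  have hS1 : (∑ m, ∑ m', ∑ k, ∑ l, a m k t x * a m' l t x *
        (ξ m * ξ m' + τ ^ 2 * (lam * rexp (lam * ψ t x) * gradx ψ t x m)
            * (lam * rexp (lam * ψ t x) * gradx ψ t x m')) *
        (lam * rexp (lam * ψ t x) * hessx ψ t x k l
          + lam ^ 2 * rexp (lam * ψ t x) * gradx ψ t x k * gradx ψ t x l))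
      = lam * rexp (lam * ψ t x)
          * (∑ m, ∑ m', ∑ k, ∑ l, a m k t x * a m' l t x * ξ m * ξ m' * hessx ψ t x k l)
        + (τ * lam * rexp (lam * ψ t x)) ^ 2 * (lam * rexp (lam * ψ t x))
          * (∑ m, ∑ m', ∑ k, ∑ l, a m k t x * a m' l t x
              * gradx ψ t x m * gradx ψ t x m' * hessx ψ t x k l)
        + lam ^ 2 * rexp (lam * ψ t x) * (aF a t x ξ (gradx ψ t x)) ^ 2
        + (τ * lam * rexp (lam * ψ t x)) ^ 2 * (lam ^ 2 * rexp (lam * ψ t x))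
          * (aF a t x (gradx ψ t x) (gradx ψ t x)) ^ 2 := by
    have step1 : (∑ m, ∑ m', ∑ k, ∑ l, a m k t x * a m' l t x *
        (ξ m * ξ m' + τ ^ 2 * (lam * rexp (lam * ψ t x) * gradx ψ t x m)
            * (lam * rexp (lam * ψ t x) * gradx ψ t x m')) *
        (lam * rexp (lam * ψ t x) * hessx ψ t x k l
          + lam ^ 2 * rexp (lam * ψ t x) * gradx ψ t x k * gradx ψ t x l))
        = ∑ m, ∑ m', ∑ k, ∑ l,
          (lam * rexp (lam * ψ t x) * (a m k t x * a m' l t x * ξ m * ξ m' * hessx ψ t x k l)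
          + (τ * lam * rexp (lam * ψ t x)) ^ 2 * (lam * rexp (lam * ψ t x))
            * (a m k t x * a m' l t x * gradx ψ t x m * gradx ψ t x m' * hessx ψ t x k l)
          + lam ^ 2 * rexp (lam * ψ t x)
            * ((a m k t x * ξ m * gradx ψ t x k) * (a m' l t x * ξ m' * gradx ψ t x l))
          + (τ * lam * rexp (lam * ψ t x)) ^ 2 * (lam ^ 2 * rexp (lam * ψ t x))
            * ((a m k t x * gradx ψ t x m * gradx ψ t x k)
                * (a m' l t x * gradx ψ t x m' * gradx ψ t x l))) := by
      refine Finset.sum_congr rfl fun m _ => Finset.sum_congr rfl fun m' _ =>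
        Finset.sum_congr rfl fun k _ => Finset.sum_congr rfl fun l _ => by ring
    rw [step1]
    simp only [Finset.sum_add_distrib]
    simp only [sum4_const_mul]
    rw [sum4_factor (fun m k => a m k t x * ξ m * gradx ψ t x k)
        (fun m' l => a m' l t x * ξ m' * gradx ψ t x l),
      sum4_factor (fun m k => a m k t x * gradx ψ t x m * gradx ψ t x k)
        (fun m' l => a m' l t x * gradx ψ t x m' * gradx ψ t x l)]
    simp only [aF]
    ring
  have hS2 : (∑ m, ∑ k, a m k t x * (lam * rexp (lam * ψ t x) * gradx ψ t x m) *
        (aD a k t x ξ ξ - τ ^ 2 * (lam * rexp (lam * ψ t x)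
          * (lam * rexp (lam * ψ t x) * aD a k t x (gradx ψ t x) (gradx ψ t x)))))
      = lam * rexp (lam * ψ t x)
          * (∑ m, ∑ k, a m k t x * gradx ψ t x m * aD a k t x ξ ξ)
        - (τ * lam * rexp (lam * ψ t x)) ^ 2 * (lam * rexp (lam * ψ t x))
          * (∑ m, ∑ k, a m k t x * gradx ψ t x m
              * aD a k t x (gradx ψ t x) (gradx ψ t x)) := by
    have step : (∑ m, ∑ k, a m k t x * (lam * rexp (lam * ψ t x) * gradx ψ t x m) *
        (aD a k t x ξ ξ - τ ^ 2 * (lam * rexp (lam * ψ t x)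
          * (lam * rexp (lam * ψ t x) * aD a k t x (gradx ψ t x) (gradx ψ t x)))))
        = ∑ m, ∑ k,
          (lam * rexp (lam * ψ t x) * (a m k t x * gradx ψ t x m * aD a k t x ξ ξ)
          - (τ * lam * rexp (lam * ψ t x)) ^ 2 * (lam * rexp (lam * ψ t x))
            * (a m k t x * gradx ψ t x m * aD a k t x (gradx ψ t x) (gradx ψ t x))) := by
      refine Finset.sum_congr rfl fun m _ => Finset.sum_congr rfl fun k _ => by ring
    rw [step]
    simp only [Finset.sum_sub_distrib]
    rw [sum2_const_mul, sum2_const_mul]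
  have hS3 : (∑ m, ∑ k, a m k t x * ξ m
        * (lam * rexp (lam * ψ t x) * aD a k t x ξ (gradx ψ t x)))
      = lam * rexp (lam * ψ t x)
          * (∑ m, ∑ k, a m k t x * ξ m * aD a k t x ξ (gradx ψ t x)) := by
    have step : (∑ m, ∑ k, a m k t x * ξ m
        * (lam * rexp (lam * ψ t x) * aD a k t x ξ (gradx ψ t x)))
        = ∑ m, ∑ k, lam * rexp (lam * ψ t x)
            * (a m k t x * ξ m * aD a k t x ξ (gradx ψ t x)) := by
      refine Finset.sum_congr rfl fun m _ => Finset.sum_congr rfl fun k _ => by ring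
    rw [step, sum2_const_mul]
  rw [hS1, hS2, hS3, ramsai]
  ring

end ident

section main
variable {n : ℕ}

lemma sumsq_pos {g : Fin n → ℝ} (hg : g ≠ 0) : 0 < ∑ i, g i ^ 2 := by
  obtain ⟨i, hi⟩ := Function.ne_iff.mp hg
  refine Finset.sum_pos' (fun j _ => sq_nonneg _) ⟨i, Finset.mem_univ i, ?_⟩
  rw [pow_two]; exact mul_self_pos.mpr hi

end main

theorem statement1
    (n : ℕ) (Ω : Set (Fin n → ℝ)) (hΩ : Bornology.IsBounded Ω) (T : ℝ) (hT : 0 < T)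
    (a : Fin n → Fin n → ℝ → (Fin n → ℝ) → ℝ)
    (ha_symm : ∀ k j, a k j = a j k)
    (ha_reg : ∀ k j, ContDiff ℝ 1 (fun p : ℝ × (Fin n → ℝ) => a k j p.1 p.2))
    (β : ℝ) (hβ : 0 < β)
    (ha_ell : ∀ t ∈ Set.Ioo (0:ℝ) T, ∀ x ∈ Ω, ∀ η : Fin n → ℝ,
      β * ∑ i, η i ^ 2 ≤ ∑ k, ∑ j, a k j t x * η k * η j)
    (ψ : ℝ → (Fin n → ℝ) → ℝ)
    (hψ : ContDiff ℝ 2 (fun p : ℝ × (Fin n → ℝ) => ψ p.1 p.2))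
    (hgrad : ∀ t ∈ Set.Icc (0:ℝ) T, ∀ x ∈ closure Ω, gradx ψ t x ≠ 0)
    -- the pseudo-convexity inequality (ramsai) on the characteristic set
    (hpos : ∀ t ∈ Set.Icc (0:ℝ) T, ∀ x ∈ closure Ω, ∀ ξ : Fin n → ℝ, ξ ≠ 0 →
      aF a t x (gradx ψ t x) ξ = 0 → 0 < ramsai a ψ t x ξ) :
    ∃ lam₀ > (0:ℝ), ∀ lam ≥ lam₀, ∀ t ∈ Set.Icc (0:ℝ) T, ∀ x ∈ closure Ω,
      ∀ τ > (0:ℝ), ∀ ξ : Fin n → ℝ, aF a t x ξ (gradx ψ t x) = 0 →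
        0 < qSym a (fun s y => Real.exp (lam * ψ s y)) t x ξ τ := by
  classical
  by_cases hne : (closure Ω).Nonempty
  swap
  · exact ⟨1, one_pos, fun lam _ t _ x hx τ _ ξ _ => (hne ⟨x, hx⟩).elim⟩
  set K : Set (ℝ × (Fin n → ℝ)) := Set.Icc 0 T ×ˢ closure Ω with hK_def
  have hKc : IsCompact K :=
    isCompact_Icc.prod (Metric.isCompact_of_isClosed_isBounded isClosed_closure hΩ.closure)
  have hKne : K.Nonempty := (Set.nonempty_Icc.mpr hT.le).prod hne
  have hψ1 : ContDiff ℝ 1 (fun p : ℝ × (Fin n → ℝ) => ψ p.1 p.2) := hψ.of_le one_le_two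
  have hca : ∀ k j, Continuous fun p : ℝ × (Fin n → ℝ) => a k j p.1 p.2 :=
    fun k j => (ha_reg k j).continuous
  have hcg : ∀ m, Continuous fun p : ℝ × (Fin n → ℝ) => gradx ψ p.1 p.2 m :=
    fun m => continuous_pd_slice hψ1 m
  have hch : ∀ k l, Continuous fun p : ℝ × (Fin n → ℝ) => hessx ψ p.1 p.2 k l :=
    fun k l => continuous_pd_pd_slice hψ k l
  have hcpda : ∀ (q k j : Fin n),
      Continuous fun p : ℝ × (Fin n → ℝ) => pd q (fun y => a k j p.1 y) p.2 :=
    fun q k j => continuous_pd_slice (ha_reg k j) q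
  set B : ℝ × (Fin n → ℝ) → ℝ :=
    fun p => aF a p.1 p.2 (gradx ψ p.1 p.2) (gradx ψ p.1 p.2) with hB_def
  have hcB : Continuous B := by
    simp only [hB_def, aF]
    exact continuous_finset_sum _ fun k _ => continuous_finset_sum _ fun j _ =>
      ((hca k j).mul (hcg k)).mul (hcg j)
  set S : ℝ × (Fin n → ℝ) → ℝ := fun p =>
    4 * ∑ m, ∑ m', ∑ k, ∑ l, a m k p.1 p.2 * a m' l p.1 p.2
        * gradx ψ p.1 p.2 m * gradx ψ p.1 p.2 m' * hessx ψ p.1 p.2 k l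
    + 2 * ∑ m, ∑ k, a m k p.1 p.2 * gradx ψ p.1 p.2 m
        * aD a k p.1 p.2 (gradx ψ p.1 p.2) (gradx ψ p.1 p.2) with hS_def
  have hcS : Continuous S := by
    simp only [hS_def, aD]
    refine Continuous.add (continuous_const.mul ?_) (continuous_const.mul ?_)
    · exact continuous_finset_sum _ fun m _ => continuous_finset_sum _ fun m' _ =>
        continuous_finset_sum _ fun k _ => continuous_finset_sum _ fun l _ =>
        ((((hca m k).mul (hca m' l)).mul (hcg m)).mul (hcg m')).mul (hch k l)
    · refine continuous_finset_sum _ fun m _ => continuous_finset_sum _ fun k _ =>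
        ((hca m k).mul (hcg m)).mul ?_
      exact continuous_finset_sum _ fun k' _ => continuous_finset_sum _ fun j _ =>
        ((hcpda k k' j).mul (hcg k')).mul (hcg j)
  have hell : ∀ (η : Fin n → ℝ), ∀ p ∈ K,
      β * ∑ i, η i ^ 2 ≤ ∑ k, ∑ j, a k j p.1 p.2 * η k * η j := by
    intro η
    have hcl : K = closure (Set.Ioo 0 T ×ˢ Ω) := by
      rw [closure_prod_eq, closure_Ioo hT.ne]
    rw [hcl]
    have hsub : Set.Ioo 0 T ×ˢ Ω ⊆ {q : ℝ × (Fin n → ℝ) |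
        β * ∑ i, η i ^ 2 ≤ ∑ k, ∑ j, a k j q.1 q.2 * η k * η j} :=
      fun q hq => ha_ell q.1 hq.1 q.2 hq.2 η
    have hclosed : IsClosed {q : ℝ × (Fin n → ℝ) |
        β * ∑ i, η i ^ 2 ≤ ∑ k, ∑ j, a k j q.1 q.2 * η k * η j} :=
      isClosed_le continuous_const (continuous_finset_sum _ fun k _ =>
        continuous_finset_sum _ fun j _ => ((hca k j).mul continuous_const).mul continuous_const)
    exact fun p hp => closure_minimal hsub hclosed hp
  have hBpos : ∀ p ∈ K, 0 < B p := by
    intro p hp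
    have h2 : 0 < β * ∑ i, (gradx ψ p.1 p.2) i ^ 2 :=
      mul_pos hβ (sumsq_pos (hgrad p.1 hp.1 p.2 hp.2))
    calc (0:ℝ) < β * ∑ i, (gradx ψ p.1 p.2) i ^ 2 := h2
      _ ≤ ∑ k, ∑ j, a k j p.1 p.2 * gradx ψ p.1 p.2 k * gradx ψ p.1 p.2 j :=
          hell (gradx ψ p.1 p.2) p hp
      _ = B p := rfl
  obtain ⟨pB, hpBK, hpBmin⟩ := hKc.exists_isMinOn hKne hcB.continuousOn
  obtain ⟨pS, hpSK, hpSmin⟩ := hKc.exists_isMinOn hKne hcS.continuousOn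
  have hb : 0 < B pB := hBpos pB hpBK
  refine ⟨max 1 ((1 - S pS) / (4 * (B pB) ^ 2)), lt_of_lt_of_le one_pos (le_max_left _ _), ?_⟩
  intro lam hlam t ht x hx τ hτ ξ hchar
  have hpK : (t, x) ∈ K := Set.mk_mem_prod ht hx
  have hlam1 : (1:ℝ) ≤ lam := le_trans (le_max_left _ _) hlam
  have hlam0 : (0:ℝ) < lam := lt_of_lt_of_le one_pos hlam1
  have hdiv : 1 - S pS ≤ lam * (4 * (B pB) ^ 2) := by
    have h4b : 0 < 4 * (B pB) ^ 2 := by positivity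
    have := le_trans (le_max_right 1 ((1 - S pS) / (4 * (B pB) ^ 2))) hlam
    calc 1 - S pS = ((1 - S pS) / (4 * (B pB) ^ 2)) * (4 * (B pB) ^ 2) := by
          field_simp
      _ ≤ lam * (4 * (B pB) ^ 2) := by
          exact mul_le_mul_of_nonneg_right this h4b.le
  rw [qSym_identity a hψ lam t x ξ τ, hchar]
  apply mul_pos (mul_pos hlam0 (Real.exp_pos _))
  have hram : 0 ≤ ramsai a ψ t x ξ := by
    rcases eq_or_ne ξ 0 with rfl | hξ
    · rw [ramsai_zero]
    · exact (hpos t ht x hx ξ hξ (by rw [aF_comm ha_symm]; exact hchar)).le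
  have hσ : 0 < (τ * lam * Real.exp (lam * ψ t x)) ^ 2 := by positivity
  have hSval : (4 * ∑ m, ∑ m', ∑ k, ∑ l, a m k t x * a m' l t x
        * gradx ψ t x m * gradx ψ t x m' * hessx ψ t x k l
      + 2 * ∑ m, ∑ k, a m k t x * gradx ψ t x m
        * aD a k t x (gradx ψ t x) (gradx ψ t x)) = S (t, x) := by
    rw [hS_def]
  have hBval : aF a t x (gradx ψ t x) (gradx ψ t x) = B (t, x) := by
    rw [hB_def]
  rw [hSval, hBval]
  have hSge : S pS ≤ S (t, x) := hpSmin hpK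
  have hBge : B pB ≤ B (t, x) := hpBmin hpK
  have hB2 : (B pB) ^ 2 ≤ (B (t, x)) ^ 2 := pow_le_pow_left₀ hb.le hBge 2
  have hkey : (1:ℝ) ≤ S (t, x) + 4 * lam * (B (t, x)) ^ 2 := by nlinarith
  nlinarith [mul_le_mul_of_nonneg_left hkey hσ.le]
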